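/- Let $N \geq 1$, let $V = \{1,\dots,N\}$ be partitioned into disjoint nonempty sets $I$ and $J$, and let $\alpha, \beta \in \mathbb{R}$. Define the $N \times N$ symmetric matrix $M$ by $M_{ij} = -\alpha$ if $i \neq j$ and $i,j$ lie in the same part, $M_{ij} = -\beta$ if $i \neq j$ and $i,j$ lie in different parts, $M_{ii} = (|I|-1)\alpha + |J|\beta$ for $i \in I$, and $M_{ii} = (|J|-1)\alpha + |I|\beta$ for $i \in J$. Then the spectrum of $M$ consists of the eigenvalue $0$ with multiplicity $1$, the eigenvalue $N\beta$ with multiplicity $1$, the eigenvalue $|I|\alpha + |J|\beta$ with multiplicity $|I|-1$, and the eigenvalue $|J|\alpha + |I|\beta$ with multiplicity $|J|-1$. -/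

import Mathlib

open Finset Polynomial

/-- The bipartite matrix of the paper: off-diagonal entries `-α` within parts and
`-β` across parts, with diagonal entries making all row sums zero. -/
def bipartiteMatrix (N : ℕ) (I : Finset (Fin N)) (α β : ℝ) :
    Matrix (Fin N) (Fin N) ℝ :=
  Matrix.of fun i j =>
    if i = j then
      (if i ∈ I then ((I.card : ℝ) - 1) * α + (Iᶜ.card : ℝ) * β
       else ((Iᶜ.card : ℝ) - 1) * α + (I.card : ℝ) * β)
    else (if (i ∈ I ↔ j ∈ I) then -α else -β)

lemma det_key (N : ℕ) (I : Finset (Fin N)) (α β x : ℝ)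
    (hs : x - ((I.card : ℝ) * α + (Iᶜ.card : ℝ) * β) ≠ 0)
    (ht : x - ((Iᶜ.card : ℝ) * α + (I.card : ℝ) * β) ≠ 0) :
    (Matrix.diagonal (fun _ => x) - bipartiteMatrix N I α β).det =
      (x - ((I.card : ℝ) * α + (Iᶜ.card : ℝ) * β)) ^ I.card *
      (x - ((Iᶜ.card : ℝ) * α + (I.card : ℝ) * β)) ^ Iᶜ.card *
      ((1 + (I.card : ℝ) * α * (x - ((I.card : ℝ) * α + (Iᶜ.card : ℝ) * β))⁻¹) *
        (1 + (Iᶜ.card : ℝ) * α * (x - ((Iᶜ.card : ℝ) * α + (I.card : ℝ) * β))⁻¹) -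
       ((Iᶜ.card : ℝ) * β * (x - ((Iᶜ.card : ℝ) * α + (I.card : ℝ) * β))⁻¹) *
        ((I.card : ℝ) * β * (x - ((I.card : ℝ) * α + (Iᶜ.card : ℝ) * β))⁻¹)) := by
  set s : ℝ := (I.card : ℝ) * α + (Iᶜ.card : ℝ) * β with hsdef
  set t : ℝ := (Iᶜ.card : ℝ) * α + (I.card : ℝ) * β with htdef
  set g : Fin N → ℝ := fun i => if i ∈ I then x - s else x - t with hg
  set G : Matrix (Fin N) (Fin N) ℝ := Matrix.diagonal g with hG
  set H : Matrix (Fin N) (Fin N) ℝ := Matrix.diagonal (fun i => (g i)⁻¹) with hH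
  set U : Matrix (Fin N) (Fin 2) ℝ := Matrix.of fun i k =>
    if i ∈ I then (if k = 0 then 1 else 0) else (if k = 0 then 0 else 1) with hU
  set V : Matrix (Fin 2) (Fin N) ℝ := Matrix.of fun k j =>
    if k = 0 then (if j ∈ I then α else β) else (if j ∈ I then β else α) with hV
  have hgne : ∀ i, g i ≠ 0 := by
    intro i; by_cases hi : i ∈ I <;> simp [hg, hi, hs, ht]
  have hGH : G * H = 1 := by
    rw [hG, hH, Matrix.diagonal_mul_diagonal]
    convert Matrix.diagonal_one
    exact mul_inv_cancel₀ (hgne _)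
  have hsplit : Matrix.diagonal (fun _ => x) - bipartiteMatrix N I α β = G + U * V := by
    ext i j
    rw [Matrix.sub_apply, Matrix.add_apply, Matrix.mul_apply, Fin.sum_univ_two]
    by_cases hij : i = j
    · subst hij
      by_cases hi : i ∈ I <;>
        simp [bipartiteMatrix, hi, hG, hU, hV, Matrix.diagonal_apply_eq, hg, hsdef, htdef] <;> ring
    · by_cases hi : i ∈ I <;> by_cases hj : j ∈ I <;>
        simp [bipartiteMatrix, hij, hi, hj, hG, Matrix.diagonal_apply_ne _ hij, hU, hV]
  rw [hsplit]
  have hfact : G + U * V = G * (1 + (H * U) * V) := by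
    rw [Matrix.mul_add, Matrix.mul_one, ← Matrix.mul_assoc, ← Matrix.mul_assoc, hGH, Matrix.one_mul]
  rw [hfact, Matrix.det_mul, Matrix.det_one_add_mul_comm]
  have hdetG : G.det = (x - s) ^ I.card * (x - t) ^ Iᶜ.card := by
    rw [hG, Matrix.det_diagonal, ← Finset.prod_mul_prod_compl I]
    congr 1
    · rw [← Finset.prod_const]
      exact Finset.prod_congr rfl (fun i hi => by simp [hg, hi])
    · rw [← Finset.prod_const]
      exact Finset.prod_congr rfl (fun i hi => by simp [hg, Finset.mem_compl.mp hi])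
  have hentry : ∀ (k l : Fin 2) (ck cl : ℝ),
      (∀ j : Fin N, V k j * (H * U) j l = if j ∈ I then ck else cl) →
      (V * (H * U)) k l = (I.card : ℝ) * ck + (Iᶜ.card : ℝ) * cl := by
    intro k l ck cl h
    rw [Matrix.mul_apply, Finset.sum_congr rfl (fun j _ => h j)]
    rw [Finset.sum_ite, Finset.sum_const, Finset.sum_const]
    simp only [Finset.filter_mem_eq_inter, Finset.univ_inter, Finset.filter_not,
      ← Finset.compl_eq_univ_sdiff, nsmul_eq_mul]
  have hW00 : (V * (H * U)) 0 0 = (I.card : ℝ) * (α * (x - s)⁻¹) + (Iᶜ.card : ℝ) * 0 :=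
    hentry 0 0 _ _ (fun j => by
      by_cases hj : j ∈ I <;> simp [hV, hH, hU, hg, Matrix.diagonal_mul, hj])
  have hW01 : (V * (H * U)) 0 1 = (I.card : ℝ) * 0 + (Iᶜ.card : ℝ) * (β * (x - t)⁻¹) :=
    hentry 0 1 _ _ (fun j => by
      by_cases hj : j ∈ I <;> simp [hV, hH, hU, hg, Matrix.diagonal_mul, hj])
  have hW10 : (V * (H * U)) 1 0 = (I.card : ℝ) * (β * (x - s)⁻¹) + (Iᶜ.card : ℝ) * 0 :=
    hentry 1 0 _ _ (fun j => by
      by_cases hj : j ∈ I <;> simp [hV, hH, hU, hg, Matrix.diagonal_mul, hj])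
  have hW11 : (V * (H * U)) 1 1 = (I.card : ℝ) * 0 + (Iᶜ.card : ℝ) * (α * (x - t)⁻¹) :=
    hentry 1 1 _ _ (fun j => by
      by_cases hj : j ∈ I <;> simp [hV, hH, hU, hg, Matrix.diagonal_mul, hj])
  rw [hdetG, Matrix.det_fin_two]
  simp only [Matrix.add_apply, Matrix.one_apply_eq, Matrix.one_apply_ne (by decide : (0 : Fin 2) ≠ 1),
    Matrix.one_apply_ne (by decide : (1 : Fin 2) ≠ 0), hW00, hW01, hW10, hW11]
  ring

lemma eval_charpoly' {n : Type*} [DecidableEq n] [Fintype n] (M : Matrix n n ℝ) (x : ℝ) :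
    M.charpoly.eval x = (Matrix.diagonal (fun _ => x) - M).det := by
  rw [Matrix.charpoly, ← coe_evalRingHom, RingHom.map_det]
  congr 1
  ext i j
  by_cases h : i = j
  · subst h; simp [Matrix.charmatrix_apply_eq]
  · simp [Matrix.charmatrix_apply_ne _ _ _ h, Matrix.diagonal_apply_ne _ h]

theorem stmt_1 (N : ℕ) (hN : 1 ≤ N) (I : Finset (Fin N))
    (hI : I.Nonempty) (hJ : Iᶜ.Nonempty) (α β : ℝ) :
    (bipartiteMatrix N I α β).charpoly =
      (X - C 0) * (X - C ((N : ℝ) * β)) *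
      (X - C ((I.card : ℝ) * α + (Iᶜ.card : ℝ) * β)) ^ (I.card - 1) *
      (X - C ((Iᶜ.card : ℝ) * α + (I.card : ℝ) * β)) ^ (Iᶜ.card - 1) := by
  have hab : I.card + Iᶜ.card = N := by
    rw [Finset.card_add_card_compl, Fintype.card_fin]
  have hNr : ((N : ℕ) : ℝ) = (I.card : ℝ) + (Iᶜ.card : ℝ) := by
    exact_mod_cast hab.symm
  have ha1 : I.card - 1 + 1 = I.card := Nat.succ_pred_eq_of_pos hI.card_pos
  have hb1 : Iᶜ.card - 1 + 1 = Iᶜ.card := Nat.succ_pred_eq_of_pos hJ.card_pos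
  apply Polynomial.eq_of_infinite_eval_eq
  apply Set.Infinite.mono (s := ({(I.card : ℝ) * α + (Iᶜ.card : ℝ) * β,
      (Iᶜ.card : ℝ) * α + (I.card : ℝ) * β} : Set ℝ)ᶜ)
  swap
  · exact Set.Finite.infinite_compl (Set.toFinite _)
  intro x hx
  simp only [Set.mem_compl_iff, Set.mem_insert_iff, Set.mem_singleton_iff, not_or] at hx
  obtain ⟨hx1, hx2⟩ := hx
  have hs : x - ((I.card : ℝ) * α + (Iᶜ.card : ℝ) * β) ≠ 0 := sub_ne_zero.mpr hx1
  have ht : x - ((Iᶜ.card : ℝ) * α + (I.card : ℝ) * β) ≠ 0 := sub_ne_zero.mpr hx2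
  show _ = eval x _
  rw [eval_charpoly', det_key N I α β x hs ht]
  simp only [eval_mul, eval_pow, eval_sub, eval_X, eval_C, sub_zero]
  rw [← ha1, ← hb1] at hs ht
  rw [hNr, ← ha1, ← hb1, pow_succ, pow_succ]
  generalize I.card - 1 = A at *
  generalize Iᶜ.card - 1 = B at *
  push_cast at hs ht ⊢
  generalize ((A:ℝ)+1) = a at *
  generalize ((B:ℝ)+1) = b at *
  have e1 : (x - (a * α + b * β)) * (x - (a * α + b * β))⁻¹ = 1 := mul_inv_cancel₀ hs
  have e2 : (x - (b * α + a * β)) * (x - (b * α + a * β))⁻¹ = 1 := mul_inv_cancel₀ ht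
  linear_combination (x - (a * α + b * β)) ^ A * (x - (b * α + a * β)) ^ B *
    (b * α * (x - (a * α + b * β)) * e2 + a * α * (x - (b * α + a * β)) * e1 +
      a * b * (α ^ 2 - β ^ 2) * ((x - (b * α + a * β)) * (x - (b * α + a * β))⁻¹ * e1 + e2))
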